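/- Let q be a prime power and let F, G ∈ F_q[x,y,z] be two homogeneous polynomials of the same degree with no common zero v ≠ 0 in F_q³. Then there exists [s:t] ∈ ℙ¹(F_q) such that the set C_{[s:t]}(F_q) = {[v] ∈ ℙ²(F_q) : sF(v)+tG(v)=0} has at most q elements, and consequently C_{[s:t]}(F_q) is not a blocking set. -/

import Mathlib

open MvPolynomial

/-- The `F_q`-line in `ℙ²(F_q)` with (dual) coefficient vector `a`. -/
def projLine (F : Type*) [Field F] (a : Fin 3 → F) :
    Set (Projectivization F (Fin 3 → F)) :=
  {P | ∑ i, a i * P.rep i = 0}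

/-- A set of points of `ℙ²(F_q)` is a blocking set if it meets every `F_q`-line. -/
def IsBlockingSet (F : Type*) [Field F] (B : Set (Projectivization F (Fin 3 → F))) : Prop :=
  ∀ a : Fin 3 → F, a ≠ 0 → (B ∩ projLine F a).Nonempty

/-- The set of `F_q`-points of the member of the pencil `⟨P₁, P₂⟩` at `[s:t] ∈ ℙ¹(F_q)`. -/
def pencilMember (F : Type*) [Field F] (P₁ P₂ : MvPolynomial (Fin 3) F)
    (st : Projectivization F (Fin 2 → F)) :
    Set (Projectivization F (Fin 3 → F)) :=
  {P | st.rep 0 * eval P.rep P₁ + st.rep 1 * eval P.rep P₂ = 0}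

section Aux

set_option linter.unusedSectionVars false

open Projectivization

variable (F : Type*) [Field F] [Fintype F]


lemma card_rep_mem_mul (n : ℕ) (W : Submodule F (Fin n → F)) :
    Nat.card {P : Projectivization F (Fin n → F) // P.rep ∈ W} * (Fintype.card F - 1)
      = Nat.card W - 1 := by
  classical
  have hbij : Function.Bijective
      (fun cp : Fˣ × {P : Projectivization F (Fin n → F) // P.rep ∈ W} =>
        (⟨(cp.1 : F) • cp.2.1.rep, W.smul_mem _ cp.2.2,
            smul_ne_zero cp.1.ne_zero cp.2.1.rep_nonzero⟩ :
          {v : Fin n → F // v ∈ W ∧ v ≠ 0})) := by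
    constructor
    · rintro ⟨c, P, hP⟩ ⟨c', P', hP'⟩ h
      simp only [Subtype.mk.injEq] at h
      have hPP' : P = P' := by
        rw [← P.mk_rep, ← P'.mk_rep]
        refine (mk_eq_mk_iff F _ _ P.rep_nonzero P'.rep_nonzero).2 ⟨c⁻¹ * c', ?_⟩
        rw [Units.smul_def, Units.val_mul, mul_smul, ← h, Units.val_inv_eq_inv_val,
          inv_smul_smul₀ c.ne_zero]
      subst hPP'
      have hcc : (c : F) = (c' : F) := smul_left_injective F P.rep_nonzero h
      simp [Prod.ext_iff, Units.ext_iff, hcc]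
    · rintro ⟨v, hvW, hv0⟩
      obtain ⟨u, hu⟩ := exists_smul_eq_mk_rep F v hv0
      refine ⟨⟨u⁻¹, ⟨Projectivization.mk F v hv0, ?_⟩⟩, ?_⟩
      · rw [← hu]; exact W.smul_mem _ hvW
      · refine Subtype.ext ?_
        show (↑u⁻¹ : F) • (Projectivization.mk F v hv0).rep = v
        rw [← hu, Units.smul_def, smul_smul, Units.val_inv_eq_inv_val,
          inv_mul_cancel₀ u.ne_zero, one_smul]
  have hcards := Nat.card_eq_of_bijective _ hbij
  rw [Nat.card_prod, Nat.card_units, Nat.card_eq_fintype_card (α := F)] at hcards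
  rw [mul_comm] at hcards
  rw [hcards]
  -- Nat.card {v // v ∈ W ∧ v ≠ 0} = Nat.card W - 1
  have h1 : {v : Fin n → F | v ∈ W ∧ v ≠ 0} = (W : Set (Fin n → F)) \ {0} := by
    ext v; simp [and_comm]
  have h2 : Nat.card {v : Fin n → F // v ∈ W ∧ v ≠ 0}
      = ((W : Set (Fin n → F)) \ {0}).ncard := by
    rw [← Nat.card_coe_set_eq, ← h1]; rfl
  rw [h2, Set.ncard_diff_singleton_of_mem W.zero_mem]
  rw [← Nat.card_coe_set_eq]
  rfl

lemma two_le_cardF : 2 ≤ Fintype.card F := Fintype.one_lt_card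

lemma cardP_mul (n : ℕ) :
    Nat.card (Projectivization F (Fin n → F)) * (Fintype.card F - 1)
      = Fintype.card F ^ n - 1 := by
  have h := card_rep_mem_mul F n ⊤
  have e : {P : Projectivization F (Fin n → F) // P.rep ∈ (⊤ : Submodule F (Fin n → F))}
      ≃ Projectivization F (Fin n → F) := Equiv.subtypeUnivEquiv (fun _ => trivial)
  rw [Nat.card_congr e] at h
  rw [h, Nat.card_congr (Submodule.topEquiv (R := F) (M := Fin n → F)).toEquiv,
    Nat.card_eq_fintype_card, Fintype.card_fun, Fintype.card_fin]

lemma cardP2 : Nat.card (Projectivization F (Fin 3 → F))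
    = Fintype.card F ^ 2 + Fintype.card F + 1 := by
  have hq := two_le_cardF F
  set q := Fintype.card F with hqdef
  have h := cardP_mul F 3
  have key : (q ^ 2 + q + 1) * (q - 1) = q ^ 3 - 1 := by
    have h1 : 1 ≤ q := by omega
    have h3 : 1 ≤ q ^ 3 := Nat.one_le_pow _ _ (by omega)
    zify [h1, h3]; ring
  exact Nat.eq_of_mul_eq_mul_right (show 0 < q - 1 by omega) (by rw [h, key])

lemma cardP1 : Nat.card (Projectivization F (Fin 2 → F)) = Fintype.card F + 1 := by
  have hq := two_le_cardF F
  set q := Fintype.card F with hqdef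
  have h := cardP_mul F 2
  have key : (q + 1) * (q - 1) = q ^ 2 - 1 := by
    have h1 : 1 ≤ q := by omega
    have h2 : 1 ≤ q ^ 2 := Nat.one_le_pow _ _ (by omega)
    zify [h1, h2]; ring
  exact Nat.eq_of_mul_eq_mul_right (show 0 < q - 1 by omega) (by rw [h, key])

lemma cardLine (p : Fin 3 → F) (hp : p ≠ 0) :
    Nat.card {A : Projectivization F (Fin 3 → F) // ∑ i, A.rep i * p i = 0}
      = Fintype.card F + 1 := by
  classical
  have hq := two_le_cardF F
  set q := Fintype.card F with hqdef
  let φ : (Fin 3 → F) →ₗ[F] F := ∑ i, p i • LinearMap.proj i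
  have hφ : ∀ v, φ v = ∑ i, v i * p i := by
    intro v
    simp [φ, mul_comm]
  obtain ⟨j, hj⟩ : ∃ j, p j ≠ 0 := Function.ne_iff.mp hp
  have hsurj : Function.Surjective φ := by
    intro a
    refine ⟨(a / p j) • (Pi.single j (1:F) : Fin 3 → F), ?_⟩
    rw [map_smul, smul_eq_mul, hφ]
    have : ∑ i, (Pi.single j (1:F) : Fin 3 → F) i * p i = p j := by
      rw [Finset.sum_eq_single j] <;> simp +contextual [Pi.single_apply]
    rw [this, div_mul_cancel₀ _ hj]
  have hker : Module.finrank F (LinearMap.ker φ) = 2 := by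
    have h1 := LinearMap.finrank_range_add_finrank_ker φ
    rw [LinearMap.range_eq_top.mpr hsurj, finrank_top, Module.finrank_self,
      Module.finrank_pi] at h1
    simp at h1
    omega
  have hcardW : Nat.card (LinearMap.ker φ) = q ^ 2 := by
    have : Fintype (LinearMap.ker φ) := Fintype.ofFinite _
    rw [Nat.card_eq_fintype_card, Module.card_eq_pow_finrank (K := F), hker]
  have h := card_rep_mem_mul F 3 (LinearMap.ker φ)
  have e : {P : Projectivization F (Fin 3 → F) // P.rep ∈ LinearMap.ker φ}
      ≃ {A : Projectivization F (Fin 3 → F) // ∑ i, A.rep i * p i = 0} :=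
    Equiv.subtypeEquivRight (by intro P; rw [LinearMap.mem_ker, hφ])
  rw [Nat.card_congr e, hcardW] at h
  have key : (q + 1) * (q - 1) = q ^ 2 - 1 := by
    have h1 : 1 ≤ q := by omega
    have h2 : 1 ≤ q ^ 2 := Nat.one_le_pow _ _ (by omega)
    zify [h1, h2]; ring
  exact Nat.eq_of_mul_eq_mul_right (show 0 < q - 1 by omega) (by rw [h, key])

instance instFiniteProj {K V : Type*} [DivisionRing K] [AddCommGroup V] [Module K V]
    [Finite V] : Finite (Projectivization K V) :=
  Quotient.finite _

variable {F}

def cross3 (x y : Fin 3 → F) : Fin 3 → F :=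
  ![x 1 * y 2 - x 2 * y 1, x 2 * y 0 - x 0 * y 2, x 0 * y 1 - x 1 * y 0]

lemma cross3_minors {a x y : Fin 3 → F} (hx : ∑ i, a i * x i = 0)
    (hy : ∑ i, a i * y i = 0) (i j : Fin 3) :
    a i * cross3 x y j = a j * cross3 x y i := by
  rw [Fin.sum_univ_three] at hx hy
  fin_cases i <;> fin_cases j <;>
    simp only [cross3, Fin.zero_eta, Fin.mk_one, Fin.reduceFinMk, Matrix.cons_val_zero,
      Matrix.cons_val_one, Matrix.head_cons, Matrix.cons_val_two, Matrix.tail_cons] <;>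
    first
      | ring1
      | linear_combination x 2 * hy - y 2 * hx
      | linear_combination y 2 * hx - x 2 * hy
      | linear_combination y 1 * hx - x 1 * hy
      | linear_combination x 1 * hy - y 1 * hx
      | linear_combination x 0 * hy - y 0 * hx
      | linear_combination y 0 * hx - x 0 * hy

lemma smul_of_minors {a n : Fin 3 → F} (h : ∀ i j, a i * n j = a j * n i) (hn : n ≠ 0) :
    ∃ c : F, a = c • n := by
  obtain ⟨k, hk⟩ : ∃ k, n k ≠ 0 := Function.ne_iff.mp hn
  refine ⟨a k / n k, funext fun i => ?_⟩
  have := h i k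
  rw [Pi.smul_apply, smul_eq_mul, div_mul_eq_mul_div, eq_div_iff hk]
  linear_combination this

lemma cross3_eq_zero {x y : Fin 3 → F} (h : cross3 x y = 0) (hx : x ≠ 0) :
    ∃ c : F, y = c • x := by
  have h0 := congrFun h 0
  have h1 := congrFun h 1
  have h2 := congrFun h 2
  simp only [cross3, Matrix.cons_val_zero, Matrix.cons_val_one, Matrix.head_cons,
    Matrix.cons_val_two, Matrix.tail_cons, Pi.zero_apply, sub_eq_zero] at h0 h1 h2
  refine smul_of_minors (fun i j => ?_) hx
  fin_cases i <;> fin_cases j <;>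
    simp only [Fin.zero_eta, Fin.mk_one, Fin.reduceFinMk] <;>
    first
      | ring1
      | linear_combination h0
      | linear_combination -h0
      | linear_combination h1
      | linear_combination -h1
      | linear_combination h2
      | linear_combination -h2

lemma cross3_ne_zero {x y : Fin 3 → F} (hx : x ≠ 0) (hy : y ≠ 0)
    (hne : Projectivization.mk F x hx ≠ Projectivization.mk F y hy) :
    cross3 x y ≠ 0 := by
  intro h
  obtain ⟨c, hc⟩ := cross3_eq_zero h hx
  apply hne
  have hc0 : c ≠ 0 := by rintro rfl; simp at hc; exact hy hc
  exact ((Projectivization.mk_eq_mk_iff' F y x hy hx).2 ⟨c, hc.symm⟩).symm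

lemma cross3_dot_left (x y : Fin 3 → F) : ∑ i, cross3 x y i * x i = 0 := by
  rw [Fin.sum_univ_three]; simp [cross3]; ring

variable (F) [Fintype F] in
lemma not_blocking_of_ncard_le (S : Set (Projectivization F (Fin 3 → F)))
    (hS : S.ncard ≤ Fintype.card F) : ¬ IsBlockingSet F S := by
  classical
  intro hB
  have hq := two_le_cardF F
  set q := Fintype.card F with hqdef
  -- find a point off S
  have hcard2 : Nat.card (Projectivization F (Fin 3 → F)) = q ^ 2 + q + 1 := cardP2 F
  obtain ⟨P₀, hP₀⟩ : ∃ P₀, P₀ ∉ S := by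
    by_contra hall
    push_neg at hall
    have : S = Set.univ := Set.eq_univ_of_forall hall
    rw [this, Set.ncard_univ, hcard2] at hS
    nlinarith
  set v₀ := P₀.rep with hv₀
  set T : Set (Projectivization F (Fin 3 → F)) := {A | ∑ i, A.rep i * v₀ i = 0} with hTdef
  have hT : T.ncard = q + 1 := by
    rw [← Nat.card_coe_set_eq]
    exact cardLine F v₀ P₀.rep_nonzero
  set g : Projectivization F (Fin 3 → F) → Projectivization F (Fin 3 → F) :=
    fun Q => if h : cross3 v₀ Q.rep = 0 then P₀ else Projectivization.mk F _ h with hg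
  have himg : g '' S ⊆ T := by
    rintro _ ⟨Q, hQ, rfl⟩
    have hQP : Projectivization.mk F v₀ P₀.rep_nonzero ≠ Projectivization.mk F Q.rep Q.rep_nonzero := by
      rw [Projectivization.mk_rep, Projectivization.mk_rep]
      rintro rfl; exact hP₀ hQ
    have hcr := cross3_ne_zero P₀.rep_nonzero Q.rep_nonzero hQP
    simp only [hg, dif_neg (show cross3 v₀ Q.rep ≠ 0 from hcr)]
    show ∑ i, (Projectivization.mk F _ hcr).rep i * v₀ i = 0
    obtain ⟨u, hu⟩ := Projectivization.exists_smul_eq_mk_rep F _ hcr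
    rw [← hu]
    simp only [Units.smul_def, Pi.smul_apply, smul_eq_mul, mul_assoc, ← Finset.mul_sum]
    rw [cross3_dot_left, mul_zero]
  obtain ⟨A, hAT, hAg⟩ : ∃ A ∈ T, A ∉ g '' S := by
    have hfin : (g '' S).Finite := (S.toFinite.image g)
    by_contra hcon
    push_neg at hcon
    have hsub : T ⊆ g '' S := hcon
    have := Set.ncard_le_ncard hsub hfin
    have h2 := Set.ncard_image_le (f := g) S.toFinite
    omega
  obtain ⟨Q, hQS, hQL⟩ := hB A.rep A.rep_nonzero
  apply hAg
  have hQP : Projectivization.mk F v₀ P₀.rep_nonzero ≠ Projectivization.mk F Q.rep Q.rep_nonzero := by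
    rw [Projectivization.mk_rep, Projectivization.mk_rep]
    rintro rfl; exact hP₀ hQS
  have hcr := cross3_ne_zero P₀.rep_nonzero Q.rep_nonzero hQP
  have hx : ∑ i, A.rep i * v₀ i = 0 := hAT
  have hy : ∑ i, A.rep i * Q.rep i = 0 := hQL
  obtain ⟨c, hc⟩ := smul_of_minors (fun i j => cross3_minors hx hy i j) hcr
  have hc0 : c ≠ 0 := by rintro rfl; simp at hc; exact A.rep_nonzero hc
  refine ⟨Q, hQS, ?_⟩
  simp only [hg, dif_neg (show cross3 v₀ Q.rep ≠ 0 from hcr)]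
  rw [← A.mk_rep]
  exact ((Projectivization.mk_eq_mk_iff' F A.rep _ A.rep_nonzero hcr).2 ⟨c, hc.symm⟩).symm

open MvPolynomial

variable (F) [Fintype F] in
theorem stmt_7_aux (P₁ P₂ : MvPolynomial (Fin 3) F)
    (hbase : ∀ v : Fin 3 → F, v ≠ 0 → ¬(eval v P₁ = 0 ∧ eval v P₂ = 0)) :
    ∃ st : Projectivization F (Fin 2 → F),
      (pencilMember F P₁ P₂ st).ncard ≤ Fintype.card F := by
  classical
  have hq := two_le_cardF F
  set q := Fintype.card F with hqdef
  have hw : ∀ P : Projectivization F (Fin 3 → F),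
      (![eval P.rep P₂, -eval P.rep P₁] : Fin 2 → F) ≠ 0 := by
    intro P h
    refine hbase P.rep P.rep_nonzero ⟨?_, ?_⟩
    · have := congrFun h 1
      simpa using this
    · have := congrFun h 0
      simpa using this
  set f : Projectivization F (Fin 3 → F) → Projectivization F (Fin 2 → F) :=
    fun P => Projectivization.mk F _ (hw P) with hf
  have hrep2 : ∀ st : Projectivization F (Fin 2 → F), st.rep 0 ≠ 0 ∨ st.rep 1 ≠ 0 := by
    intro st
    by_contra hcon
    push_neg at hcon
    refine st.rep_nonzero (funext fun i => ?_)
    fin_cases i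
    · exact hcon.1
    · exact hcon.2
  have hfiber : ∀ st, pencilMember F P₁ P₂ st = f ⁻¹' {st} := by
    intro st
    ext P
    set e₁ := eval P.rep P₁
    set e₂ := eval P.rep P₂
    constructor
    · intro hP
      have hP' : st.rep 0 * e₁ + st.rep 1 * e₂ = 0 := hP
      show f P = st
      rw [hf]
      conv_rhs => rw [← st.mk_rep]
      refine (Projectivization.mk_eq_mk_iff' F _ _ (hw P) st.rep_nonzero).2 ?_
      rcases ne_or_eq (st.rep 1) 0 with ht | ht
      · refine ⟨-e₁ / st.rep 1, funext fun i => ?_⟩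
        fin_cases i <;>
          simp only [Pi.smul_apply, smul_eq_mul, Matrix.cons_val_zero, Matrix.cons_val_one,
            Matrix.head_cons, Fin.zero_eta, Fin.mk_one]
        · field_simp
          linear_combination -hP'
        · field_simp
          rfl
      · have hs : st.rep 0 ≠ 0 := by rcases hrep2 st with h | h; exact h; exact absurd ht h
        have he₁ : e₁ = 0 := by
          rw [ht, zero_mul, add_zero] at hP'
          exact (mul_eq_zero.mp hP').resolve_left hs
        refine ⟨e₂ / st.rep 0, funext fun i => ?_⟩
        fin_cases i <;>
          simp only [Pi.smul_apply, smul_eq_mul, Matrix.cons_val_zero, Matrix.cons_val_one,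
            Matrix.head_cons, Fin.zero_eta, Fin.mk_one]
        · field_simp
          rfl
        · rw [ht, mul_zero]
          show (0:F) = -e₁
          rw [he₁, neg_zero]
    · intro hP
      have hP' : Projectivization.mk F _ (hw P) = st := hP
      obtain ⟨u, hu⟩ := Projectivization.exists_smul_eq_mk_rep F _ (hw P)
      rw [hP'] at hu
      show st.rep 0 * e₁ + st.rep 1 * e₂ = 0
      rw [← hu]
      simp only [Units.smul_def, Pi.smul_apply, smul_eq_mul, Matrix.cons_val_zero,
        Matrix.cons_val_one, Matrix.head_cons]
      ring
  by_contra hcon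
  push_neg at hcon
  have hFin2 : Fintype (Projectivization F (Fin 2 → F)) := Fintype.ofFinite _
  have hFin3 : Fintype (Projectivization F (Fin 3 → F)) := Fintype.ofFinite _
  have hsum := Finset.card_eq_sum_card_fiberwise
    (f := f) (s := Finset.univ) (t := Finset.univ) (fun x _ => Finset.mem_univ _)
  have hge : ∀ st : Projectivization F (Fin 2 → F),
      q + 1 ≤ (Finset.univ.filter fun P => f P = st).card := by
    intro st
    have h1 := hcon st
    rw [hfiber st] at h1
    have h2 : (f ⁻¹' {st}).ncard = (Finset.univ.filter fun P => f P = st).card := by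
      rw [Set.ncard_eq_toFinset_card']
      congr 1
      ext P
      simp
    omega
  have htot : (Finset.univ (α := Projectivization F (Fin 2 → F))).card * (q + 1)
      ≤ (Finset.univ (α := Projectivization F (Fin 3 → F))).card := by
    rw [hsum]
    calc (Finset.univ (α := Projectivization F (Fin 2 → F))).card * (q+1)
          = ∑ _st : Projectivization F (Fin 2 → F), (q+1) := by
          rw [Finset.sum_const, smul_eq_mul]
      _ ≤ _ := Finset.sum_le_sum fun st _ => hge st
  rw [Finset.card_univ, Finset.card_univ, ← Nat.card_eq_fintype_card, ← Nat.card_eq_fintype_card,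
    cardP1 F, cardP2 F] at htot
  nlinarith

end Aux

/-- **Averaging argument.** A pencil with no `F_q`-points in its base locus has a member with at
most `q` rational points; in particular this member is nonblocking. -/
theorem stmt_7 (F : Type*) [Field F] [Fintype F] (d : ℕ)
    (P₁ P₂ : MvPolynomial (Fin 3) F)
    (h₁ : P₁.IsHomogeneous d) (h₂ : P₂.IsHomogeneous d)
    (hbase : ∀ v : Fin 3 → F, v ≠ 0 → ¬(eval v P₁ = 0 ∧ eval v P₂ = 0)) :
    ∃ st : Projectivization F (Fin 2 → F),
      (pencilMember F P₁ P₂ st).ncard ≤ Fintype.card F ∧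
      ¬ IsBlockingSet F (pencilMember F P₁ P₂ st) := by
  obtain ⟨st, hst⟩ := stmt_7_aux F P₁ P₂ hbase
  exact ⟨st, hst, not_blocking_of_ncard_le F _ hst⟩
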